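/- Let T be large, Q = (log T)^{C_0} for a positive constant C_0, and let L satisfy (e^2 Q)^{L/2} ≤ T. For any primes p_1, ..., p_ℓ ≤ Q with ℓ ≤ L, the average (1/T)∫_T^{2T} ∏_{j=1}^ℓ cos(t log p_j) dt equals E(∏_{j=1}^ℓ cos θ_{p_j}) + O(e^{-L}), where {θ_p} are independent random variables uniformly distributed on [0, 2π] indexed by the primes, and the expectation on the right is over this product measure. -/

import Mathlib

open MeasureTheory ProbabilityTheory Real Filter Finset

section Aux

lemma prod_cos_expand {ι : Type*} [DecidableEq ι] (s : Finset ι) (x : ι → ℝ) :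
    ∏ j ∈ s, Real.cos (x j)
      = (2:ℝ)⁻¹ ^ s.card *
        ∑ A ∈ s.powerset, Real.cos (∑ j ∈ s, (if j ∈ A then x j else - x j)) := by
  classical
  induction s using Finset.induction_on with
  | empty => simp
  | @insert a s ha ih =>
    have key : ∑ A ∈ (insert a s).powerset,
        Real.cos (∑ j ∈ insert a s, (if j ∈ A then x j else - x j))
        = 2 * Real.cos (x a) *
          ∑ A ∈ s.powerset, Real.cos (∑ j ∈ s, (if j ∈ A then x j else - x j)) := by
      rw [Finset.powerset_insert, Finset.sum_union, Finset.sum_image]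
      · have h1 : ∀ A ∈ s.powerset,
            Real.cos (∑ j ∈ insert a s, (if j ∈ A then x j else - x j))
            = Real.cos ((∑ j ∈ s, (if j ∈ A then x j else - x j)) - x a) := by
          intro A hA
          rw [Finset.sum_insert ha]
          have : a ∉ A := fun h => ha (Finset.mem_powerset.1 hA h)
          rw [if_neg this]
          ring_nf
        have h2 : ∀ A ∈ s.powerset,
            Real.cos (∑ j ∈ insert a s, (if j ∈ insert a A then x j else - x j))
            = Real.cos ((∑ j ∈ s, (if j ∈ A then x j else - x j)) + x a) := by
          intro A hA
          rw [Finset.sum_insert ha, if_pos (Finset.mem_insert_self a A)]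
          have : ∀ j ∈ s, (if j ∈ insert a A then x j else - x j)
              = (if j ∈ A then x j else - x j) := by
            intro j hj
            have hja : j ≠ a := fun h => ha (h ▸ hj)
            simp [Finset.mem_insert, hja]
          rw [Finset.sum_congr rfl this]
          ring_nf
        rw [Finset.sum_congr rfl h1, Finset.sum_congr rfl h2, ← Finset.sum_add_distrib]
        rw [Finset.mul_sum]
        refine Finset.sum_congr rfl fun A hA => ?_
        rw [Real.cos_sub, Real.cos_add]
        ring
      · intro A hA B hB hAB
        have haA : a ∉ A := fun h => ha (Finset.mem_powerset.1 hA h)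
        have haB : a ∉ B := fun h => ha (Finset.mem_powerset.1 hB h)
        rw [← Finset.erase_insert haA, ← Finset.erase_insert haB, hAB]
      · rw [Finset.disjoint_left]
        intro A hA hA2
        obtain ⟨B, hB, rfl⟩ := Finset.mem_image.1 hA2
        exact ha (Finset.mem_powerset.1 hA (Finset.mem_insert_self a B))
    rw [Finset.prod_insert ha, ih, key, Finset.card_insert_of_notMem ha, pow_succ]
    ring

lemma osc_integral_bound (l T : ℝ) (hl : l ≠ 0) (hT : 0 < T) :
    |(1/T) * ∫ t in T..(2*T), Real.cos (t * l)| ≤ 2 / (T * |l|) := by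
  rw [intervalIntegral.integral_comp_mul_right Real.cos hl, integral_cos,
    smul_eq_mul, abs_mul, abs_mul, abs_inv]
  have h1 : |Real.sin (2*T*l) - Real.sin (T*l)| ≤ 2 := by
    calc |Real.sin (2*T*l) - Real.sin (T*l)| ≤ |Real.sin (2*T*l)| + |Real.sin (T*l)| :=
      abs_sub _ _
    _ ≤ 1 + 1 := add_le_add (Real.abs_sin_le_one _) (Real.abs_sin_le_one _)
    _ = 2 := by norm_num
  have h2 : |1/T| = 1/T := abs_of_pos (by positivity)
  rw [h2, div_eq_mul_inv (2:ℝ), mul_inv]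
  calc 1/T * (|l|⁻¹ * |Real.sin (2*T*l) - Real.sin (T*l)|)
      ≤ 1/T * (|l|⁻¹ * 2) := by
        exact mul_le_mul_of_nonneg_left
          (mul_le_mul_of_nonneg_left h1 (by positivity)) (by positivity)
    _ = 2 * (T⁻¹ * |l|⁻¹) := by ring

variable {Ω : Type*} [MeasurableSpace Ω]

lemma intg_of_bdd {μ : Measure Ω} [IsProbabilityMeasure μ] {f : Ω → ℝ}
    (hf : Measurable f) (hb : ∀ ω, |f ω| ≤ 1) : Integrable f μ :=
  (integrable_const (1:ℝ)).mono' hf.aestronglyMeasurable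
    (Filter.Eventually.of_forall fun ω => by simpa [Real.norm_eq_abs] using hb ω)

lemma cos_moment_zero (μ : Measure Ω) [IsProbabilityMeasure μ]
    (θ : ℕ → Ω → ℝ) (hmeas : ∀ p, Measurable (θ p))
    (hunif : ∀ p : ℕ, μ.map (θ p)
      = (ENNReal.ofReal (2 * π))⁻¹ • (volume.restrict (Set.Icc (0:ℝ) (2 * π))))
    (q : ℕ) (c : ℤ) (hc : c ≠ 0) :
    ∫ ω, Real.cos ((c:ℝ) * θ q ω) ∂μ = 0 := by
  have hf : Measurable fun x : ℝ => Real.cos ((c:ℝ) * x) :=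
    Real.measurable_cos.comp (measurable_const_mul _)
  have h1 : ∫ ω, Real.cos ((c:ℝ) * θ q ω) ∂μ
      = (2*π)⁻¹ * ∫ x in Set.Icc (0:ℝ) (2*π), Real.cos ((c:ℝ) * x) := by
    rw [← MeasureTheory.integral_map (hmeas q).aemeasurable hf.aestronglyMeasurable, hunif q,
      MeasureTheory.integral_smul_measure, ENNReal.toReal_inv,
      ENNReal.toReal_ofReal (by positivity), smul_eq_mul]
  have h2 : ∫ x in Set.Icc (0:ℝ) (2*π), Real.cos ((c:ℝ) * x) = 0 := by
    rw [MeasureTheory.integral_Icc_eq_integral_Ioc,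
      ← intervalIntegral.integral_of_le (by positivity : (0:ℝ) ≤ 2*π)]
    have hc' : (c:ℝ) ≠ 0 := Int.cast_ne_zero.2 hc
    have h : ∀ t : ℝ, Real.cos ((c:ℝ) * t) = Real.cos (t * (c:ℝ)) := fun t => by ring_nf
    simp_rw [h]
    rw [intervalIntegral.integral_comp_mul_right Real.cos hc', integral_cos]
    have : (2*π) * (c:ℝ) = ((2*c : ℤ) : ℝ) * π := by push_cast; ring
    rw [this, Real.sin_int_mul_pi]
    simp
  rw [h1, h2, mul_zero]

lemma sin_moment_zero (μ : Measure Ω) [IsProbabilityMeasure μ]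
    (θ : ℕ → Ω → ℝ) (hmeas : ∀ p, Measurable (θ p))
    (hunif : ∀ p : ℕ, μ.map (θ p)
      = (ENNReal.ofReal (2 * π))⁻¹ • (volume.restrict (Set.Icc (0:ℝ) (2 * π))))
    (q : ℕ) (c : ℤ) (hc : c ≠ 0) :
    ∫ ω, Real.sin ((c:ℝ) * θ q ω) ∂μ = 0 := by
  have hf : Measurable fun x : ℝ => Real.sin ((c:ℝ) * x) :=
    Real.measurable_sin.comp (measurable_const_mul _)
  have h1 : ∫ ω, Real.sin ((c:ℝ) * θ q ω) ∂μ
      = (2*π)⁻¹ * ∫ x in Set.Icc (0:ℝ) (2*π), Real.sin ((c:ℝ) * x) := by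
    rw [← MeasureTheory.integral_map (hmeas q).aemeasurable hf.aestronglyMeasurable, hunif q,
      MeasureTheory.integral_smul_measure, ENNReal.toReal_inv,
      ENNReal.toReal_ofReal (by positivity), smul_eq_mul]
  have h2 : ∫ x in Set.Icc (0:ℝ) (2*π), Real.sin ((c:ℝ) * x) = 0 := by
    rw [MeasureTheory.integral_Icc_eq_integral_Ioc,
      ← intervalIntegral.integral_of_le (by positivity : (0:ℝ) ≤ 2*π)]
    have hc' : (c:ℝ) ≠ 0 := Int.cast_ne_zero.2 hc
    have h : ∀ t : ℝ, Real.sin ((c:ℝ) * t) = Real.sin (t * (c:ℝ)) := fun t => by ring_nf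
    simp_rw [h]
    rw [intervalIntegral.integral_comp_mul_right Real.sin hc', integral_sin]
    have : (2*π) * (c:ℝ) = ((c : ℤ) : ℝ) * (2*π) := by ring
    rw [this, Real.cos_int_mul_two_pi]
    simp
  rw [h1, h2, mul_zero]

lemma exp_cos_sum_zero (μ : Measure Ω) [IsProbabilityMeasure μ]
    (θ : ℕ → Ω → ℝ) (hmeas : ∀ p, Measurable (θ p))
    (hindep : iIndepFun θ μ)
    (hunif : ∀ p : ℕ, μ.map (θ p)
      = (ENNReal.ofReal (2 * π))⁻¹ • (volume.restrict (Set.Icc (0:ℝ) (2 * π))))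
    (s : Finset ℕ) (e : ℕ → ℤ) (q0 : ℕ) (hq0 : q0 ∈ s) (hc : e q0 ≠ 0) :
    ∫ ω, Real.cos (∑ q ∈ s, (e q : ℝ) * θ q ω) ∂μ = 0 := by
  classical
  set Y : ℕ → Ω → ℝ := fun q ω => (e q : ℝ) * θ q ω with hY
  have hYmeas : ∀ q, Measurable (Y q) := fun q => (hmeas q).const_mul _
  have hYindep : iIndepFun Y μ :=
    hindep.comp (fun q x => (e q : ℝ) * x) (fun q => measurable_const_mul _)
  set R : Ω → ℝ := fun ω => ∑ q ∈ s.erase q0, Y q ω with hRdef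
  have hRmeas : Measurable R := Finset.measurable_sum _ fun q _ => hYmeas q
  have hR : IndepFun R (Y q0) μ := by
    have := hYindep.indepFun_finset_sum_of_notMem hYmeas (Finset.notMem_erase q0 s)
    convert this using 1
    ext ω
    simp [hRdef, Finset.sum_apply]
  have hsplit : ∀ ω, (∑ q ∈ s, (e q : ℝ) * θ q ω) = Y q0 ω + R ω := by
    intro ω
    rw [hRdef]
    exact (Finset.add_sum_erase s (fun q => Y q ω) hq0).symm
  simp_rw [hsplit, Real.cos_add]
  have hA : Measurable fun ω => Real.cos (Y q0 ω) := Real.measurable_cos.comp (hYmeas q0)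
  have hB : Measurable fun ω => Real.cos (R ω) := Real.measurable_cos.comp hRmeas
  have hC : Measurable fun ω => Real.sin (Y q0 ω) := Real.measurable_sin.comp (hYmeas q0)
  have hD : Measurable fun ω => Real.sin (R ω) := Real.measurable_sin.comp hRmeas
  have iA : Integrable (fun ω => Real.cos (Y q0 ω)) μ :=
    intg_of_bdd hA fun ω => Real.abs_cos_le_one _
  have iB : Integrable (fun ω => Real.cos (R ω)) μ :=
    intg_of_bdd hB fun ω => Real.abs_cos_le_one _
  have iC : Integrable (fun ω => Real.sin (Y q0 ω)) μ :=
    intg_of_bdd hC fun ω => Real.abs_sin_le_one _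
  have iD : Integrable (fun ω => Real.sin (R ω)) μ :=
    intg_of_bdd hD fun ω => Real.abs_sin_le_one _
  have indAB : IndepFun (fun ω => Real.cos (Y q0 ω)) (fun ω => Real.cos (R ω)) μ :=
    hR.symm.comp Real.measurable_cos Real.measurable_cos
  have indCD : IndepFun (fun ω => Real.sin (Y q0 ω)) (fun ω => Real.sin (R ω)) μ :=
    hR.symm.comp Real.measurable_sin Real.measurable_sin
  have iAB : Integrable (fun ω => Real.cos (Y q0 ω) * Real.cos (R ω)) μ := by
    exact indAB.integrable_mul iA iB
  have iCD : Integrable (fun ω => Real.sin (Y q0 ω) * Real.sin (R ω)) μ := by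
    exact indCD.integrable_mul iC iD
  rw [MeasureTheory.integral_sub iAB iCD]
  have e1 : ∫ ω, Real.cos (Y q0 ω) * Real.cos (R ω) ∂μ
      = (∫ ω, Real.cos (Y q0 ω) ∂μ) * ∫ ω, Real.cos (R ω) ∂μ := by
    simpa [Pi.mul_apply] using indAB.integral_fun_mul_eq_mul_integral iA.1 iB.1
  have e2 : ∫ ω, Real.sin (Y q0 ω) * Real.sin (R ω) ∂μ
      = (∫ ω, Real.sin (Y q0 ω) ∂μ) * ∫ ω, Real.sin (R ω) ∂μ := by
    simpa [Pi.mul_apply] using indCD.integral_fun_mul_eq_mul_integral iC.1 iD.1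
  have h0 : ∫ ω, Real.cos (Y q0 ω) ∂μ = 0 := cos_moment_zero μ θ hmeas hunif q0 (e q0) hc
  have h0' : ∫ ω, Real.sin (Y q0 ω) ∂μ = 0 := sin_moment_zero μ θ hmeas hunif q0 (e q0) hc
  rw [e1, e2, h0, h0', zero_mul, zero_mul, sub_zero]

lemma regroup_aux {ℓ : ℕ} (p : Fin ℓ → ℕ) (A : Finset (Fin ℓ)) (g : ℕ → ℝ) :
    ∑ j, (if j ∈ A then g (p j) else - g (p j))
      = ∑ q ∈ Finset.image p Finset.univ,
          ((((A.filter (fun j => p j = q)).card : ℤ)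
            - (((Finset.univ \ A).filter (fun j => p j = q)).card : ℤ) : ℤ) : ℝ) * g q := by
  classical
  rw [← Finset.sum_fiberwise_of_maps_to
    (fun j _ => Finset.mem_image_of_mem p (Finset.mem_univ j))
    (fun j => if j ∈ A then g (p j) else - g (p j))]
  refine Finset.sum_congr rfl fun q hq => ?_
  have h1 : ∀ j ∈ Finset.univ.filter (fun j => p j = q),
      (if j ∈ A then g (p j) else - g (p j)) = (if j ∈ A then g q else - g q) := by
    intro j hj
    have : p j = q := (Finset.mem_filter.1 hj).2
    rw [this]
  rw [Finset.sum_congr rfl h1, Finset.sum_ite]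
  have e1 : (Finset.univ.filter (fun j => p j = q)).filter (fun j => j ∈ A)
      = A.filter (fun j => p j = q) := by
    ext j; simp [and_comm]
  have e2 : (Finset.univ.filter (fun j => p j = q)).filter (fun j => j ∉ A)
      = (Finset.univ \ A).filter (fun j => p j = q) := by
    ext j; simp [and_comm]
  rw [e1, e2, Finset.sum_const, Finset.sum_const, nsmul_eq_mul, nsmul_eq_mul]
  push_cast
  ring

lemma count_factorization {ℓ : ℕ} (p : Fin ℓ → ℕ) (hp : ∀ j, (p j).Prime)
    (A : Finset (Fin ℓ)) (q : ℕ) :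
    (∏ j ∈ A, p j).factorization q = (A.filter (fun j => p j = q)).card := by
  classical
  rw [Nat.factorization_prod (fun j _ => (hp j).ne_zero), Finsupp.finset_sum_apply]
  have h : ∀ j ∈ A, (p j).factorization q = if p j = q then 1 else 0 := by
    intro j _
    rw [(hp j).factorization, Finsupp.single_apply]
  rw [Finset.sum_congr rfl h, Finset.sum_boole]
  simp

lemma log_gap {a b : ℕ} (ha : 0 < a) (hb : 0 < b) (hab : a ≠ b) :
    1 / (2 * (min a b : ℝ)) ≤ |Real.log a - Real.log b| := by
  have key : ∀ a b : ℕ, 0 < b → b < a → 1/(2*(b:ℝ)) ≤ Real.log a - Real.log b := by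
    intro a b hb hba
    have hb1 : (1:ℝ) ≤ b := Nat.one_le_cast.2 hb
    have hlog : Real.log ((b:ℝ)/((b:ℝ)+1)) ≤ (b:ℝ)/((b:ℝ)+1) - 1 :=
      Real.log_le_sub_one_of_pos (by positivity)
    rw [Real.log_div (by positivity) (by positivity)] at hlog
    have h2 : (b:ℝ)/((b:ℝ)+1) - 1 = -(1/((b:ℝ)+1)) := by field_simp; ring
    have h1 : 1/((b:ℝ)+1) ≤ Real.log ((b:ℝ)+1) - Real.log b := by linarith
    have hba' : (b:ℝ) + 1 ≤ a := by exact_mod_cast hba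
    have h3 : Real.log ((b:ℝ)+1) ≤ Real.log a := Real.log_le_log (by positivity) hba'
    have h4 : 1/(2*(b:ℝ)) ≤ 1/((b:ℝ)+1) := by
      apply one_div_le_one_div_of_le (by positivity)
      linarith
    linarith
  rcases lt_or_gt_of_ne hab with h | h
  · have := key b a ha h
    rw [min_eq_left (by exact_mod_cast le_of_lt h : (a:ℝ) ≤ b)]
    calc 1/(2*(a:ℝ)) ≤ Real.log b - Real.log a := this
    _ ≤ |Real.log b - Real.log a| := le_abs_self _
    _ = |Real.log a - Real.log b| := abs_sub_comm _ _
  · have := key a b hb h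
    rw [min_eq_right (by exact_mod_cast le_of_lt h : (b:ℝ) ≤ a)]
    calc 1/(2*(b:ℝ)) ≤ Real.log a - Real.log b := this
    _ ≤ |Real.log a - Real.log b| := le_abs_self _

end Aux

/-- For `T` large, `Q = (log T)^{C₀}` and `(e²Q)^{L/2} ≤ T`, the average
`(1/T)∫_T^{2T} ∏ cos(t log p_j) dt` equals the expectation of `∏ cos θ_{p_j}` for
independent uniformly distributed angles, up to `O(e^{-L})`. -/
theorem stmt_0 {Ω : Type*} [MeasurableSpace Ω] (μ : Measure Ω) [IsProbabilityMeasure μ]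
    (θ : ℕ → Ω → ℝ) (hmeas : ∀ p, Measurable (θ p))
    (hindep : iIndepFun θ μ)
    (hunif : ∀ p : ℕ, μ.map (θ p)
      = (ENNReal.ofReal (2 * π))⁻¹ • (volume.restrict (Set.Icc (0:ℝ) (2 * π))))
    (C₀ : ℝ) (hC₀ : 0 < C₀) :
    ∃ C > 0, ∃ T₀ : ℝ, ∀ T ≥ T₀, ∀ L : ℝ,
      (Real.exp 2 * (Real.log T) ^ C₀) ^ (L / 2) ≤ T →
      ∀ ℓ : ℕ, (ℓ : ℝ) ≤ L → ∀ p : Fin ℓ → ℕ,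
        (∀ j, (p j).Prime) → (∀ j, ((p j : ℝ)) ≤ (Real.log T) ^ C₀) →
        |(1 / T) * (∫ t in T..(2 * T), ∏ j, Real.cos (t * Real.log (p j)))
          - ∫ ω, ∏ j, Real.cos (θ (p j) ω) ∂μ| ≤ C * Real.exp (-L) := by
  classical
  refine ⟨4, by norm_num, Real.exp 1, ?_⟩
  intro T hT L hTL ℓ hℓL p hp hpQ
  set Q : ℝ := (Real.log T) ^ C₀ with hQdef
  have hT0 : 0 < T := lt_of_lt_of_le (Real.exp_pos 1) hT
  have hlogT : 1 ≤ Real.log T := (Real.le_log_iff_exp_le hT0).2 hT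
  have hQ1 : 1 ≤ Q := Real.one_le_rpow hlogT (le_of_lt hC₀)
  have hQ0 : 0 < Q := lt_of_lt_of_le one_pos hQ1
  -- T ≥ exp L * Q^(L/2)
  have hTbig : Real.exp L * Q ^ (L/2) ≤ T := by
    have h1 : (Real.exp 2 * Q) ^ (L/2) = (Real.exp 2) ^ (L/2) * Q ^ (L/2) :=
      Real.mul_rpow (le_of_lt (Real.exp_pos 2)) (le_of_lt hQ0)
    have h2 : (Real.exp 2 : ℝ) ^ (L/2) = Real.exp L := by
      rw [Real.rpow_def_of_pos (Real.exp_pos 2), Real.log_exp]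
      ring_nf
    calc Real.exp L * Q ^ (L/2) = (Real.exp 2 * Q) ^ (L/2) := by rw [h1, h2]
    _ ≤ T := hTL
  set lam : Finset (Fin ℓ) → ℝ :=
    fun A => ∑ j, (if j ∈ A then Real.log (p j) else - Real.log (p j)) with hlamdef
  set thsum : Finset (Fin ℓ) → Ω → ℝ :=
    fun A ω => ∑ j, (if j ∈ A then θ (p j) ω else - θ (p j) ω) with hthdef
  have hcard : (Finset.univ : Finset (Fin ℓ)).card = ℓ := by simp
  have hexp1 : ∀ t : ℝ, ∏ j, Real.cos (t * Real.log (p j))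
      = (2:ℝ)⁻¹ ^ ℓ * ∑ A ∈ (Finset.univ : Finset (Fin ℓ)).powerset,
          Real.cos (t * lam A) := by
    intro t
    have h := prod_cos_expand (Finset.univ : Finset (Fin ℓ)) (fun j => t * Real.log (p j))
    rw [hcard] at h
    rw [h]
    congr 1
    refine Finset.sum_congr rfl fun A _ => ?_
    congr 1
    rw [hlamdef]
    simp only
    rw [Finset.mul_sum]
    refine Finset.sum_congr rfl fun j _ => ?_
    split_ifs <;> ring
  have hexp2 : ∀ ω : Ω, ∏ j, Real.cos (θ (p j) ω)
      = (2:ℝ)⁻¹ ^ ℓ * ∑ A ∈ (Finset.univ : Finset (Fin ℓ)).powerset,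
          Real.cos (thsum A ω) := by
    intro ω
    have h := prod_cos_expand (Finset.univ : Finset (Fin ℓ)) (fun j => θ (p j) ω)
    rw [hcard] at h
    exact h
  have hthmeas : ∀ A : Finset (Fin ℓ), Measurable (thsum A) := by
    intro A
    rw [hthdef]
    apply Finset.measurable_sum
    intro j _
    split_ifs
    · exact hmeas _
    · exact (hmeas _).neg
  have hI : ∫ t in T..(2*T), ∏ j, Real.cos (t * Real.log (p j))
      = (2:ℝ)⁻¹ ^ ℓ * ∑ A ∈ (Finset.univ : Finset (Fin ℓ)).powerset,
          ∫ t in T..(2*T), Real.cos (t * lam A) := by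
    simp_rw [hexp1]
    rw [intervalIntegral.integral_const_mul, intervalIntegral.integral_finset_sum]
    intro A _
    exact (Real.continuous_cos.comp (continuous_id.mul continuous_const)).intervalIntegrable _ _
  have hE : ∫ ω, ∏ j, Real.cos (θ (p j) ω) ∂μ
      = (2:ℝ)⁻¹ ^ ℓ * ∑ A ∈ (Finset.univ : Finset (Fin ℓ)).powerset,
          ∫ ω, Real.cos (thsum A ω) ∂μ := by
    simp_rw [hexp2]
    rw [MeasureTheory.integral_const_mul, MeasureTheory.integral_finset_sum]
    intro A _
    exact intg_of_bdd (Real.measurable_cos.comp (hthmeas A)) fun ω => Real.abs_cos_le_one _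
  have key : ∀ A ∈ (Finset.univ : Finset (Fin ℓ)).powerset,
      |(1/T) * (∫ t in T..(2*T), Real.cos (t * lam A)) - ∫ ω, Real.cos (thsum A ω) ∂μ|
        ≤ 4 * Real.exp (-L) := by
    intro A _
    set a := ∏ j ∈ A, p j with hadef
    set b := ∏ j ∈ (Finset.univ \ A), p j with hbdef
    have ha0 : 0 < a := Finset.prod_pos fun j _ => (hp j).pos
    have hb0 : 0 < b := Finset.prod_pos fun j _ => (hp j).pos
    have hlA : Real.log a = ∑ j ∈ A, Real.log (p j) := by
      rw [hadef]
      push_cast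
      exact Real.log_prod (fun j _ => by exact_mod_cast (hp j).ne_zero)
    have hlB : Real.log b = ∑ j ∈ (Finset.univ \ A), Real.log (p j) := by
      rw [hbdef]
      push_cast
      exact Real.log_prod (fun j _ => by exact_mod_cast (hp j).ne_zero)
    have hlamA : lam A = Real.log a - Real.log b := by
      rw [hlamdef]
      simp only
      rw [Finset.sum_ite]
      have e1 : (Finset.univ.filter (fun j => j ∈ A)) = A := by
        ext j; simp
      have e2 : (Finset.univ.filter (fun j => j ∉ A)) = Finset.univ \ A := by
        ext j; simp
      rw [e1, e2, hlA, hlB, Finset.sum_neg_distrib]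
      ring
    set e : ℕ → ℤ := fun q => ((A.filter (fun j => p j = q)).card : ℤ)
      - (((Finset.univ \ A).filter (fun j => p j = q)).card : ℤ) with hedef
    have hthA : ∀ ω, thsum A ω = ∑ q ∈ Finset.image p Finset.univ, (e q : ℝ) * θ q ω := by
      intro ω
      rw [hthdef, hedef]
      exact regroup_aux p A (fun q => θ q ω)
    have hefact : ∀ q, e q = (a.factorization q : ℤ) - (b.factorization q : ℤ) := by
      intro q
      rw [hedef]
      simp only
      rw [hadef, hbdef, count_factorization p hp A q, count_factorization p hp _ q]
    by_cases hab : a = b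
    · have hlam0 : lam A = 0 := by rw [hlamA, hab, sub_self]
      have hIA : (1/T) * (∫ t in T..(2*T), Real.cos (t * lam A)) = 1 := by
        rw [hlam0]
        simp only [mul_zero, Real.cos_zero]
        rw [intervalIntegral.integral_const]
        simp only [smul_eq_mul, mul_one]
        field_simp
        ring
      have hez : ∀ q, e q = 0 := by
        intro q
        rw [hefact q, hab, sub_self]
      have hEA : ∫ ω, Real.cos (thsum A ω) ∂μ = 1 := by
        have hone : ∀ ω, Real.cos (thsum A ω) = 1 := by
          intro ω
          rw [hthA ω]
          have hz : ∀ q ∈ Finset.image p Finset.univ, (e q : ℝ) * θ q ω = 0 := by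
            intro q _
            rw [hez q]
            simp
          rw [Finset.sum_congr rfl hz, Finset.sum_const_zero, Real.cos_zero]
        simp_rw [hone]
        simp
      rw [hIA, hEA, sub_self, abs_zero]
      positivity
    · have hlamne : lam A ≠ 0 := by
        rw [hlamA, sub_ne_zero]
        intro h
        apply hab
        have h' : (a:ℝ) = b := by
          have h2 := congrArg Real.exp h
          rwa [Real.exp_log (by exact_mod_cast ha0), Real.exp_log (by exact_mod_cast hb0)] at h2
        exact_mod_cast h'
      have hex : ∃ q ∈ Finset.image p Finset.univ, e q ≠ 0 := by
        by_contra hcon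
        push_neg at hcon
        apply hab
        have hfac : a.factorization = b.factorization := by
          ext q
          by_cases hq : q ∈ Finset.image p Finset.univ
          · have h3 := hcon q hq
            rw [hefact q] at h3
            omega
          · have h1 : a.factorization q = 0 := by
              rw [hadef, count_factorization p hp A q]
              by_contra hne
              obtain ⟨j, hj⟩ := Finset.card_ne_zero.1 hne
              exact hq (Finset.mem_image.2 ⟨j, Finset.mem_univ j, (Finset.mem_filter.1 hj).2⟩)
            have h2 : b.factorization q = 0 := by
              rw [hbdef, count_factorization p hp _ q]
              by_contra hne
              obtain ⟨j, hj⟩ := Finset.card_ne_zero.1 hne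
              exact hq (Finset.mem_image.2 ⟨j, Finset.mem_univ j, (Finset.mem_filter.1 hj).2⟩)
            rw [h1, h2]
        exact Nat.factorization_inj (Set.mem_setOf.2 ha0.ne') (Set.mem_setOf.2 hb0.ne') hfac
      obtain ⟨q0, hq0, he0⟩ := hex
      have hEA : ∫ ω, Real.cos (thsum A ω) ∂μ = 0 := by
        simp_rw [hthA]
        exact exp_cos_sum_zero μ θ hmeas hindep hunif _ e q0 hq0 he0
      rw [hEA, sub_zero]
      have hosc := osc_integral_bound (lam A) T hlamne hT0
      have hlampos : 0 < |lam A| := abs_pos.2 hlamne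
      have hgap : 1/(2 * (min (a:ℝ) b)) ≤ |lam A| := by
        rw [hlamA]
        exact log_gap ha0 hb0 hab
      have hmin0 : (0:ℝ) < min (a:ℝ) b := by
        apply lt_min <;> [exact_mod_cast ha0; exact_mod_cast hb0]
      have hinv : 1/|lam A| ≤ 2 * (min (a:ℝ) b) := by
        have h := one_div_le_one_div_of_le (by positivity) hgap
        rwa [one_div_one_div] at h
      have hab_prod : (a:ℝ) * b = ∏ j, (p j : ℝ) := by
        rw [hadef, hbdef]
        push_cast
        rw [mul_comm, Finset.prod_sdiff (Finset.subset_univ A)]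
      have hprodQ : (∏ j, (p j : ℝ)) ≤ Q ^ (ℓ:ℕ) := by
        calc (∏ j, (p j:ℝ)) ≤ ∏ _j : Fin ℓ, Q :=
          Finset.prod_le_prod (fun j _ => by positivity) (fun j _ => hpQ j)
        _ = Q ^ ℓ := by rw [Finset.prod_const, hcard]
      have hQl : Q ^ (ℓ:ℕ) ≤ Q ^ (L:ℝ) := by
        rw [← Real.rpow_natCast Q ℓ]
        exact Real.rpow_le_rpow_of_exponent_le hQ1 hℓL
      have hminQ : (min (a:ℝ) b) ≤ Q ^ (L/2) := by
        have h1 : (min (a:ℝ) b)^2 ≤ (a:ℝ) * b := by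
          have h2 := mul_le_mul (min_le_left (a:ℝ) b) (min_le_right (a:ℝ) b)
            (le_of_lt hmin0) (by positivity)
          simpa [sq] using h2
        have h2 : ((Q ^ (L/2):ℝ)) ^ 2 = Q ^ (L:ℝ) := by
          rw [← Real.rpow_natCast (Q ^ (L/2)) 2, ← Real.rpow_mul (le_of_lt hQ0)]
          norm_num
        have hsq : (min (a:ℝ) b) ^ 2 ≤ (Q ^ (L/2)) ^ 2 := by
          rw [h2]
          calc (min (a:ℝ) b)^2 ≤ (a:ℝ) * b := h1
          _ = ∏ j, (p j : ℝ) := hab_prod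
          _ ≤ Q ^ (ℓ:ℕ) := hprodQ
          _ ≤ Q ^ (L:ℝ) := hQl
        exact (pow_le_pow_iff_left₀ (le_of_lt hmin0) (by positivity) (by norm_num)).1 hsq
      have hQT : Q ^ (L/2) ≤ T * Real.exp (-L) := by
        have h := mul_le_mul_of_nonneg_left hTbig (le_of_lt (Real.exp_pos (-L)))
        rwa [← mul_assoc, ← Real.exp_add, neg_add_cancel, Real.exp_zero, one_mul,
          mul_comm (Real.exp (-L)) T] at h
      have hfinal : 2 / (T * |lam A|) ≤ 4 * Real.exp (-L) := by
        calc 2/(T*|lam A|) = (2/T) * (1/|lam A|) := div_mul_eq_div_mul_one_div 2 T |lam A|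
        _ ≤ (2/T) * (2 * (min (a:ℝ) b)) :=
            mul_le_mul_of_nonneg_left hinv (by positivity)
        _ ≤ (2/T) * (2 * Q^(L/2)) := by gcongr
        _ = 4 * (Q^(L/2)) / T := by ring
        _ ≤ 4 * (T * Real.exp (-L)) / T := by gcongr
        _ = 4 * Real.exp (-L) := by field_simp
      exact le_trans hosc hfinal
  have habs : (1 / T) * (∫ t in T..(2 * T), ∏ j, Real.cos (t * Real.log (p j)))
      - ∫ ω, ∏ j, Real.cos (θ (p j) ω) ∂μ
      = (2:ℝ)⁻¹ ^ ℓ * ∑ A ∈ (Finset.univ : Finset (Fin ℓ)).powerset,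
          ((1/T) * (∫ t in T..(2*T), Real.cos (t * lam A))
            - ∫ ω, Real.cos (thsum A ω) ∂μ) := by
    rw [hI, hE, Finset.sum_sub_distrib, ← Finset.mul_sum]
    ring
  rw [habs, abs_mul, abs_pow]
  have h2l : |(2:ℝ)⁻¹| = 2⁻¹ := by norm_num
  rw [h2l]
  calc (2:ℝ)⁻¹^ℓ * |∑ A ∈ (Finset.univ : Finset (Fin ℓ)).powerset,
        ((1/T) * (∫ t in T..(2*T), Real.cos (t * lam A))
          - ∫ ω, Real.cos (thsum A ω) ∂μ)|
      ≤ (2:ℝ)⁻¹^ℓ * ∑ A ∈ (Finset.univ : Finset (Fin ℓ)).powerset,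
        |(1/T) * (∫ t in T..(2*T), Real.cos (t * lam A))
          - ∫ ω, Real.cos (thsum A ω) ∂μ| :=
      mul_le_mul_of_nonneg_left (Finset.abs_sum_le_sum_abs _ _) (by positivity)
    _ ≤ (2:ℝ)⁻¹^ℓ * ((2:ℝ)^ℓ * (4 * Real.exp (-L))) := by
      apply mul_le_mul_of_nonneg_left _ (by positivity)
      have hs := Finset.sum_le_card_nsmul _ _ (4*Real.exp (-L)) key
      rw [Finset.card_powerset, hcard] at hs
      calc ∑ A ∈ (Finset.univ : Finset (Fin ℓ)).powerset,
          |(1/T) * (∫ t in T..(2*T), Real.cos (t * lam A))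
            - ∫ ω, Real.cos (thsum A ω) ∂μ|
          ≤ (2^ℓ : ℕ) • (4 * Real.exp (-L)) := hs
        _ = (2:ℝ)^ℓ * (4 * Real.exp (-L)) := by
            rw [nsmul_eq_mul]
            push_cast
            ring
    _ = 4 * Real.exp (-L) := by
      rw [← mul_assoc, ← mul_pow]
      norm_num
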